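/- Let 𝔥 be the 3-dimensional Heisenberg Lie algebra over ℝ (basis x, y, z with [x,y] = z, [x,z] = [y,z] = 0). Then 𝔥 is not quadratically presented: there is no surjective Lie algebra homomorphism from the free Lie algebra on two generators modulo an ideal generated by elements of bracket length exactly 2 onto 𝔥 inducing an isomorphism on abelianizations such that the kernel is generated in degree 2. Concretely: 𝔥 ≅ L(ℝ²)/Γ₃(L(ℝ²)) where Γ₃ is the third term of the lower central series, and Γ₃(L(ℝ²)) is not generated by degree-2 elements of L(ℝ²) as an ideal intersected with degree ≤ 2, i.e., 𝔥 is not isomorphic to any quotient of the free Lie algebra on 𝔥/[𝔥,𝔥] by an ideal generated by elements in the span of brackets of generators. -/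

import Mathlib

/-- The degree-one part of the free Lie algebra on a type `X` over `k`:
the `k`-span of the generators. -/
noncomputable def degreeOnePart (k X : Type) [Field k] : Submodule k (FreeLieAlgebra k X) :=
  Submodule.span k (Set.range (FreeLieAlgebra.of k (X := X)))

/-- The space of quadratic elements (bracket length exactly two) of the free Lie algebra:
the span of brackets of two degree-one elements.  (Taking `X` to be a basis of a vector
space `V`, this is `Λ²V ⊂ L(V)`.) -/
noncomputable def quadraticPart (k X : Type) [Field k] : Submodule k (FreeLieAlgebra k X) :=
  Submodule.span k
    {z | ∃ a ∈ degreeOnePart k X, ∃ b ∈ degreeOnePart k X, z = ⁅a, b⁆}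

/-- The closed ideal (pro-nilpotent closure) generated by a subspace `W` of the free Lie
algebra: the intersection over all `M` of the ideal generated by `W` together with the
`M`-th term of the lower central series.  Quotienting the free (pro-nilpotent) Lie
algebra by this ideal realises the quotient by the ideal topologically generated by `W`. -/
noncomputable def closedIdealGenBy (k X : Type) [Field k] (W : Submodule k (FreeLieAlgebra k X)) :
    LieIdeal k (FreeLieAlgebra k X) :=
  ⨅ M : ℕ, (LieSubmodule.lieSpan k (FreeLieAlgebra k X) (W : Set (FreeLieAlgebra k X)) ⊔
    LieModule.lowerCentralSeries k (FreeLieAlgebra k X) (FreeLieAlgebra k X) M)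

/-- A Lie algebra `𝔤` over `k` is quadratically presented if it is isomorphic to the
quotient of a free Lie algebra `L(V)` (on a vector space `V`, here presented by a basis
type `X`) by the closed ideal generated by a subspace `W ⊆ Λ²V` of elements of bracket
length exactly two. -/
def QuadraticallyPresented (k : Type) [Field k] (𝔤 : Type) [LieRing 𝔤]
    [LieAlgebra k 𝔤] : Prop :=
  ∃ (X : Type) (W : Submodule k (FreeLieAlgebra k X)),
    W ≤ quadraticPart k X ∧
    Nonempty (𝔤 ≃ₗ⁅k⁆ (FreeLieAlgebra k X ⧸ closedIdealGenBy k X W))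

/-! ### Auxiliary material: strictly upper triangular `4 × 4` matrices -/

attribute [local instance 100] LieRing.ofAssociativeRing

noncomputable section StmtAux

abbrev Stmt8Mat4 := Matrix (Fin 4) (Fin 4) ℝ

namespace Stmt8

/-- Matrices vanishing strictly below the `k`-th superdiagonal. -/
def Pm (k : ℕ) : Submodule ℝ Stmt8Mat4 where
  carrier := {M | ∀ i j : Fin 4, (j : ℕ) < (i : ℕ) + k → M i j = 0}
  add_mem' := by intro a b ha hb i j h; simp [ha i j h, hb i j h]
  zero_mem' := by intro i j h; simp
  smul_mem' := by intro c a ha i j h; simp [ha i j h]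

/-- Matrices supported on the `k`-th superdiagonal. -/
def Dm (k : ℕ) : Submodule ℝ Stmt8Mat4 where
  carrier := {M | ∀ i j : Fin 4, (j : ℕ) ≠ (i : ℕ) + k → M i j = 0}
  add_mem' := by intro a b ha hb i j h; simp [ha i j h, hb i j h]
  zero_mem' := by intro i j h; simp
  smul_mem' := by intro c a ha i j h; simp [ha i j h]

lemma mul_mem_Pm {a b : ℕ} {M N : Stmt8Mat4} (hM : M ∈ Pm a) (hN : N ∈ Pm b) :
    M * N ∈ Pm (a + b) := by
  intro i j h
  rw [Matrix.mul_apply]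
  apply Finset.sum_eq_zero
  intro k _
  by_cases hk : (k : ℕ) < (i : ℕ) + a
  · rw [hM i k hk, zero_mul]
  · rw [hN k j (by omega), mul_zero]

lemma mul_mem_Dm {a b : ℕ} {M N : Stmt8Mat4} (hM : M ∈ Dm a) (hN : N ∈ Dm b) :
    M * N ∈ Dm (a + b) := by
  intro i j h
  rw [Matrix.mul_apply]
  apply Finset.sum_eq_zero
  intro k _
  by_cases hk : (k : ℕ) = (i : ℕ) + a
  · rw [hN k j (by omega), mul_zero]
  · rw [hM i k hk, zero_mul]

lemma Pm_anti {a b : ℕ} (h : a ≤ b) : Pm b ≤ Pm a := fun M hM i j hj => hM i j (by omega)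

lemma Dm_le_Pm {k : ℕ} : Dm k ≤ Pm k := fun M hM i j hj => hM i j (by omega)

lemma Pm_four {M : Stmt8Mat4} (hM : M ∈ Pm 4) : M = 0 := by
  ext i j
  have := j.isLt
  exact hM i j (by omega)

lemma Dm2_Pm3 {M : Stmt8Mat4} (h2 : M ∈ Dm 2) (h3 : M ∈ Pm 3) : M = 0 := by
  ext i j
  by_cases h : (j : ℕ) = (i : ℕ) + 2
  · exact h3 i j (by omega)
  · exact h2 i j h

lemma lie_mem_Pm {a b : ℕ} {M N : Stmt8Mat4} (hM : M ∈ Pm a) (hN : N ∈ Pm b) :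
    ⁅M, N⁆ ∈ Pm (a + b) := by
  rw [Ring.lie_def]
  exact sub_mem (mul_mem_Pm hM hN) (by rw [Nat.add_comm a b]; exact mul_mem_Pm hN hM)

/-- The strictly upper triangular matrices, as a Lie subalgebra. -/
def sut : LieSubalgebra ℝ Stmt8Mat4 :=
  { Pm 1 with
    lie_mem' := fun {x y} hx hy => Pm_anti (by norm_num) (lie_mem_Pm hx hy) }

lemma mem_sut_iff {M : Stmt8Mat4} : M ∈ sut ↔ M ∈ Pm 1 := Iff.rfl

def Amat : Stmt8Mat4 := !![0,1,0,0; 0,0,1,0; 0,0,0,1; 0,0,0,0]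
def Bmat : Stmt8Mat4 := !![0,0,0,0; 0,0,1,0; 0,0,0,0; 0,0,0,0]

lemma Amat_mem : Amat ∈ Dm 1 := by
  intro i j h
  fin_cases i <;> fin_cases j <;> simp_all [Amat, Matrix.vecHead, Matrix.vecTail]

lemma Bmat_mem : Bmat ∈ Dm 1 := by
  intro i j h
  fin_cases i <;> fin_cases j <;> simp_all [Bmat, Matrix.vecHead, Matrix.vecTail]

def nA : sut := ⟨Amat, Dm_le_Pm Amat_mem⟩
def nB : sut := ⟨Bmat, Dm_le_Pm Bmat_mem⟩

lemma key_entry : (⁅Amat, ⁅Amat, Bmat⁆⁆ : Stmt8Mat4) 0 3 = -2 := by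
  simp [Ring.lie_def, Amat, Bmat, Matrix.mul_apply, Fin.sum_univ_four, Matrix.sub_apply]
  norm_num

lemma key_ne : (⁅nA, ⁅nA, nB⁆⁆ : sut) ≠ 0 := by
  intro h
  have h2 : ((⁅nA, ⁅nA, nB⁆⁆ : sut) : Stmt8Mat4) = 0 := by rw [h]; rfl
  rw [LieSubalgebra.coe_bracket, LieSubalgebra.coe_bracket] at h2
  have := key_entry
  rw [show ((nA : Stmt8Mat4)) = Amat from rfl, show ((nB : Stmt8Mat4)) = Bmat from rfl] at h2
  rw [h2] at this
  norm_num at this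

/-! ### Auxiliary material: generation of the free Lie algebra in degree one -/

open FreeLieAlgebra

variable (X : Type)

local notation "FL" => FreeLieAlgebra ℝ X
local notation "Γ" k =>
  LieModule.lowerCentralSeries ℝ (FreeLieAlgebra ℝ X) (FreeLieAlgebra ℝ X) k

lemma bracket_mem_gamma_one (u v : FL) : ⁅u, v⁆ ∈ (Γ 1) := by
  rw [LieModule.lowerCentralSeries_succ]
  exact LieSubmodule.lie_mem_lie (LieSubmodule.mem_top u) (LieSubmodule.mem_top v)

lemma deg1_sup_gamma_one : degreeOnePart ℝ X ⊔ (Γ 1).toSubmodule = ⊤ := by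
  set P : Submodule ℝ FL := degreeOnePart ℝ X ⊔ (Γ 1).toSubmodule with hP
  let K : LieSubalgebra ℝ FL :=
    { P with
      lie_mem' := fun {u v} _ _ => le_sup_right (α := Submodule ℝ FL)
        (bracket_mem_gamma_one X u v) }
  have hofK : ∀ t : X, of ℝ t ∈ K := fun t =>
    le_sup_left (α := Submodule ℝ FL) (Submodule.subset_span ⟨t, rfl⟩)
  let ρ : FL →ₗ⁅ℝ⁆ K := lift ℝ fun t => ⟨of ℝ t, hofK t⟩
  have hcomp : K.incl.comp ρ = LieHom.id := by
    apply FreeLieAlgebra.hom_ext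
    intro t
    simp [ρ, lift_of_apply]
  have hall : ∀ u : FL, u ∈ K := by
    intro u
    have := DFunLike.congr_fun hcomp u
    simp only [LieHom.comp_apply, LieHom.id_apply] at this
    rw [← this]
    exact (ρ u).2
  rw [eq_top_iff]
  exact fun u _ => hall u

/-- The quotient map `L → L ⧸ I` as a morphism of Lie algebras. -/
def lieQuotMk {L : Type*} [LieRing L] [LieAlgebra ℝ L] (I : LieIdeal ℝ L) :
    L →ₗ⁅ℝ⁆ L ⧸ I :=
  { I.toSubmodule.mkQ with
    map_lie' := rfl }

lemma lieQuotMk_surjective {L : Type*} [LieRing L] [LieAlgebra ℝ L] (I : LieIdeal ℝ L) :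
    Function.Surjective (lieQuotMk I) :=
  Submodule.mkQ_surjective _

lemma lieQuotMk_eq_zero {L : Type*} [LieRing L] [LieAlgebra ℝ L] (I : LieIdeal ℝ L) (u : L) :
    lieQuotMk I u = 0 ↔ u ∈ I :=
  Submodule.Quotient.mk_eq_zero _

end Stmt8

end StmtAux

set_option maxHeartbeats 2000000 in
/-- The three-dimensional real Heisenberg Lie algebra (any real Lie algebra
`H` spanned by linearly independent elements `x, y, z` with `⁅x,y⁆ = z` and `z` central)
is not quadratically presented. -/
theorem stmt8 (H : Type) [LieRing H] [LieAlgebra ℝ H]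
    (x y z : H)
    (hxy : ⁅x, y⁆ = z) (hxz : ⁅x, z⁆ = 0) (hyz : ⁅y, z⁆ = 0)
    (hind : LinearIndependent ℝ ![x, y, z])
    (hspan : Submodule.span ℝ {x, y, z} = ⊤) :
    ¬ QuadraticallyPresented ℝ H := by
  rintro ⟨X, W, hW, ⟨e⟩⟩
  classical
  open FreeLieAlgebra Stmt8 in
  -- Notation
  set L := FreeLieAlgebra ℝ X with hLdef
  set I := closedIdealGenBy ℝ X W with hIdef
  set Γn : ℕ → LieIdeal ℝ L := fun k => LieModule.lowerCentralSeries ℝ L L k with hΓdef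
  set φ : L →ₗ⁅ℝ⁆ H := (e.symm.toLieHom).comp (lieQuotMk I) with hφdef
  -- Basic facts about `φ`
  have hφsurj : Function.Surjective φ := by
    intro h
    obtain ⟨q, hq⟩ := e.symm.surjective h
    obtain ⟨u, hu⟩ := lieQuotMk_surjective I q
    exact ⟨u, by rw [hφdef]; simp [LieHom.comp_apply, hu, hq]⟩
  have hker : ∀ u : L, φ u = 0 ↔ u ∈ I := by
    intro u
    rw [hφdef]
    simp only [LieHom.comp_apply]
    constructor
    · intro h
      have : lieQuotMk I u = 0 := by
        apply e.symm.injective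
        rw [h]; simp
      exact (lieQuotMk_eq_zero I u).mp this
    · intro h
      rw [(lieQuotMk_eq_zero I u).mpr h]
      simp
  -- Basic facts about `H`
  have hyx : ⁅y, x⁆ = -z := by rw [← lie_skew, hxy]
  have hzx : ⁅z, x⁆ = 0 := by rw [← lie_skew, hxz, neg_zero]
  have hzy : ⁅z, y⁆ = 0 := by rw [← lie_skew, hyz, neg_zero]
  have hcoord : ∀ h : H, ∃ a b c : ℝ, h = a • x + b • y + c • z := by
    intro h
    have hmem : h ∈ Submodule.span ℝ ({x, y, z} : Set H) := by rw [hspan]; trivial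
    rw [show ({x, y, z} : Set H) = insert x (insert y {z}) from rfl] at hmem
    obtain ⟨a, w, hw, rfl⟩ := Submodule.mem_span_insert.mp hmem
    obtain ⟨b, w', hw', rfl⟩ := Submodule.mem_span_insert.mp hw
    obtain ⟨c, rfl⟩ := Submodule.mem_span_singleton.mp hw'
    exact ⟨a, b, c, by rw [add_assoc]⟩
  choose cx cy cz hco using hcoord
  have huniq : ∀ a b c : ℝ, a • x + b • y + c • z = 0 → a = 0 ∧ b = 0 ∧ c = 0 := by
    intro a b c h
    have h3 := Fintype.linearIndependent_iff.mp hind ![a, b, c] ?_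
    · exact ⟨h3 0, h3 1, h3 2⟩
    · rw [Fin.sum_univ_three]
      simpa using h
  have hz0 : z ≠ 0 := by
    intro h
    have := huniq 0 0 1 (by simp [h])
    exact one_ne_zero this.2.2
  have hzc : ∀ h : H, ⁅h, z⁆ = 0 := by
    intro h
    rw [hco h]
    simp [add_lie, smul_lie, hxz, hyz, lie_self]
  have hbr : ∀ a b c a' b' c' : ℝ,
      ⁅a • x + b • y + c • z, a' • x + b' • y + c' • z⁆ = (a * b' - b * a') • z := by
    intro a b c a' b' c'
    simp only [add_lie, lie_add, smul_lie, lie_smul, hxy, hxz, hyz, hyx, hzx, hzy, lie_self,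
      smul_zero, zero_add, add_zero, smul_neg, smul_smul]
    module
  -- `I` is contained in the first term of the lower central series
  have hIle : ∀ M : ℕ, I ≤ LieSubmodule.lieSpan ℝ L (W : Set L) ⊔ Γn M := fun M => iInf_le _ M
  have hquadΓ1 : quadraticPart ℝ X ≤ LieSubmodule.toSubmodule (Γn 1) := by
    rw [quadraticPart]
    apply Submodule.span_le.mpr
    rintro w ⟨u, _, v, _, rfl⟩
    exact bracket_mem_gamma_one X u v
  have hspanWle : LieSubmodule.lieSpan ℝ L (W : Set L) ≤ Γn 1 :=
    LieSubmodule.lieSpan_le.mpr fun w hw => hquadΓ1 (hW hw)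
  have hIΓ1 : I ≤ Γn 1 := le_trans (hIle 1) (sup_le hspanWle le_rfl)
  have hWI : ∀ w ∈ W, w ∈ I := by
    intro w hw
    rw [hIdef, closedIdealGenBy, LieSubmodule.mem_iInf]
    intro M
    exact le_sup_left (α := LieIdeal ℝ L) (LieSubmodule.subset_lieSpan hw)
  -- images of the lower central series under `φ`
  have hΓ1span : LieSubmodule.toSubmodule (Γn 1) =
      Submodule.span ℝ {m : L | ∃ u ∈ (⊤ : LieIdeal ℝ L), ∃ v ∈ (⊤ : LieIdeal ℝ L), ⁅u, v⁆ = m} := by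
    show LieSubmodule.toSubmodule (LieModule.lowerCentralSeries ℝ L L 1) = _
    rw [LieModule.lowerCentralSeries_succ, LieModule.lowerCentralSeries_zero]
    exact LieSubmodule.lieIdeal_oper_eq_linear_span' ..
  have hφΓ1 : ∀ u ∈ Γn 1, φ u ∈ Submodule.span ℝ ({z} : Set H) := by
    have : LieSubmodule.toSubmodule (Γn 1) ≤ (Submodule.span ℝ ({z} : Set H)).comap φ.toLinearMap := by
      rw [hΓ1span]
      apply Submodule.span_le.mpr
      rintro _ ⟨u, -, v, -, rfl⟩
      simp only [SetLike.mem_coe, Submodule.mem_comap, LieHom.coe_toLinearMap]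
      rw [φ.map_lie u v, hco (φ u), hco (φ v), hbr]
      exact Submodule.smul_mem _ _ (Submodule.subset_span rfl)
    exact fun u hu => this hu
  have hΓ2span : LieSubmodule.toSubmodule (Γn 2) =
      Submodule.span ℝ {m : L | ∃ u ∈ (⊤ : LieIdeal ℝ L), ∃ v ∈ Γn 1, ⁅u, v⁆ = m} := by
    show LieSubmodule.toSubmodule (LieModule.lowerCentralSeries ℝ L L 2) = _
    rw [show (2 : ℕ) = 1 + 1 from rfl, LieModule.lowerCentralSeries_succ]
    exact LieSubmodule.lieIdeal_oper_eq_linear_span' ..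
  have hφΓ2 : ∀ u ∈ Γn 2, φ u = 0 := by
    have : LieSubmodule.toSubmodule (Γn 2) ≤ LinearMap.ker φ.toLinearMap := by
      rw [hΓ2span]
      apply Submodule.span_le.mpr
      rintro _ ⟨u, -, v, hv, rfl⟩
      rw [SetLike.mem_coe, LinearMap.mem_ker]
      show φ ⁅u, v⁆ = 0
      rw [φ.map_lie u v]
      obtain ⟨c, hc⟩ := Submodule.mem_span_singleton.mp (hφΓ1 v hv)
      rw [← hc, lie_smul, hzc, smul_zero]
    exact fun u hu => this hu
  have hΓ2I : ∀ u ∈ Γn 2, u ∈ I := fun u hu => (hker u).mp (hφΓ2 u hu)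
  -- coordinates of the generators
  set Ac : X → ℝ := fun t => cx (φ (of ℝ t)) with hAc
  set Bc : X → ℝ := fun t => cy (φ (of ℝ t)) with hBc
  set Cc : X → ℝ := fun t => cz (φ (of ℝ t)) with hCc
  have hofco : ∀ t : X, φ (of ℝ t) = Ac t • x + Bc t • y + Cc t • z := by
    intro t
    simp only [hAc, hBc, hCc]
    exact hco _
  -- a surjectivity principle
  have hSfull : ∀ S : Submodule ℝ H, (∀ t : X, φ (of ℝ t) ∈ S) → z ∈ S → S = ⊤ := by
    intro S hgen hzS
    rw [eq_top_iff]
    intro h _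
    obtain ⟨u, rfl⟩ := hφsurj h
    have hu : u ∈ degreeOnePart ℝ X ⊔ LieSubmodule.toSubmodule (Γn 1) := by
      have := deg1_sup_gamma_one X
      rw [show Γn 1 = LieModule.lowerCentralSeries ℝ L L 1 from rfl, this]
      trivial
    obtain ⟨d, hd, g, hg, rfl⟩ := Submodule.mem_sup.mp hu
    rw [map_add φ]
    apply S.add_mem
    · have : degreeOnePart ℝ X ≤ S.comap φ.toLinearMap := by
        rw [degreeOnePart]
        apply Submodule.span_le.mpr
        rintro _ ⟨t, rfl⟩
        exact hgen t
      exact this hd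
    · obtain ⟨c, hc⟩ := Submodule.mem_span_singleton.mp (hφΓ1 g hg)
      rw [← hc]
      exact S.smul_mem _ hzS
  -- existence of two generators with independent images
  have hex : ∃ s t : X, Ac s * Bc t - Bc s * Ac t ≠ 0 := by
    by_contra hdet
    push_neg at hdet
    by_cases hall : ∀ t : X, Ac t = 0 ∧ Bc t = 0
    · have hzt : Submodule.span ℝ ({z} : Set H) = ⊤ := by
        apply hSfull
        · intro t
          rw [hofco t, (hall t).1, (hall t).2]
          simp only [zero_smul, zero_add]
          exact Submodule.smul_mem _ _ (Submodule.subset_span rfl)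
        · exact Submodule.subset_span rfl
      have hx : x ∈ Submodule.span ℝ ({z} : Set H) := by rw [hzt]; trivial
      obtain ⟨r, hr⟩ := Submodule.mem_span_singleton.mp hx
      have : (1 : ℝ) • x + (0 : ℝ) • y + (-r) • z = 0 := by
        rw [← hr]; module
      exact one_ne_zero (huniq _ _ _ this).1
    · push_neg at hall
      obtain ⟨t₀, ht₀⟩ := hall
      have hrt : ∀ t : X, ∃ r : ℝ, Ac t = r * Ac t₀ ∧ Bc t = r * Bc t₀ := by
        intro t
        have hd0 : Ac t₀ * Bc t - Bc t₀ * Ac t = 0 := hdet t₀ t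
        by_cases hA : Ac t₀ = 0
        · have hB : Bc t₀ ≠ 0 := ht₀ hA
          refine ⟨Bc t / Bc t₀, ?_, by field_simp⟩
          have hAt : Ac t = 0 := by
            have h' := hd0
            rw [hA, zero_mul, zero_sub, neg_eq_zero] at h'
            rcases mul_eq_zero.mp h' with h | h
            · exact absurd h hB
            · exact h
          rw [hAt, hA, mul_zero]
        · refine ⟨Ac t / Ac t₀, by field_simp, ?_⟩
          field_simp
          linarith [hd0]
      set w : H := Ac t₀ • x + Bc t₀ • y with hwdef
      have hwz : Submodule.span ℝ ({w, z} : Set H) = ⊤ := by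
        apply hSfull
        · intro t
          obtain ⟨r, hr1, hr2⟩ := hrt t
          rw [hofco t, hr1, hr2]
          have : (r * Ac t₀) • x + (r * Bc t₀) • y + Cc t • z = r • w + Cc t • z := by
            rw [hwdef]; module
          rw [this]
          exact Submodule.add_mem _
            (Submodule.smul_mem _ _ (Submodule.subset_span (by simp)))
            (Submodule.smul_mem _ _ (Submodule.subset_span (by simp)))
        · exact Submodule.subset_span (by simp)
      have hx : x ∈ Submodule.span ℝ ({w, z} : Set H) := by rw [hwz]; trivial
      have hy : y ∈ Submodule.span ℝ ({w, z} : Set H) := by rw [hwz]; trivial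
      obtain ⟨s, u, hsu⟩ := Submodule.mem_span_pair.mp hx
      obtain ⟨s', u', hsu'⟩ := Submodule.mem_span_pair.mp hy
      rw [hwdef] at hsu hsu'
      have e1 : (s * Ac t₀ - 1) • x + (s * Bc t₀) • y + u • z = 0 := by
        have : (s * Ac t₀ - 1) • x + (s * Bc t₀) • y + u • z
            = (s • (Ac t₀ • x + Bc t₀ • y) + u • z) - x := by module
        rw [this, hsu, sub_self]
      have e2 : (s' * Ac t₀) • x + (s' * Bc t₀ - 1) • y + u' • z = 0 := by
        have : (s' * Ac t₀) • x + (s' * Bc t₀ - 1) • y + u' • z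
            = (s' • (Ac t₀ • x + Bc t₀ • y) + u' • z) - y := by module
        rw [this, hsu', sub_self]
      obtain ⟨ha1, hb1, -⟩ := huniq _ _ _ e1
      obtain ⟨ha2, hb2, -⟩ := huniq _ _ _ e2
      rw [sub_eq_zero] at ha1 hb2
      have h1 : (s * Ac t₀) * (s' * Bc t₀) = 1 := by rw [ha1, hb2]; ring
      have h2 : (s * Bc t₀) * (s' * Ac t₀) = 0 := by rw [hb1]; ring
      have h3 : (s * Ac t₀) * (s' * Bc t₀) = (s * Bc t₀) * (s' * Ac t₀) := by ring
      rw [h1, h2] at h3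
      exact one_ne_zero h3
  obtain ⟨a, b, hδ⟩ := hex
  have hab : a ≠ b := by
    intro h; rw [h] at hδ; exact hδ (by ring)
  set p : L := ⁅of ℝ a, of ℝ b⁆ with hpdef
  have hφp : φ p = (Ac a * Bc b - Bc a * Ac b) • z := by
    rw [hpdef, φ.map_lie, hofco a, hofco b, hbr]
  have hφpne : φ p ≠ 0 := by
    rw [hφp]; exact smul_ne_zero hδ hz0
  -- every generator lies in `span {of a, of b} + Γ¹`
  have hgen2 : ∀ t : X, of ℝ t ∈
      Submodule.span ℝ ({of ℝ a, of ℝ b} : Set L) ⊔ LieSubmodule.toSubmodule (Γn 1) := by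
    intro t
    set δ : ℝ := Ac a * Bc b - Bc a * Ac b with hδdef
    set s : ℝ := (Ac t * Bc b - Bc t * Ac b) / δ with hsdef
    set r : ℝ := (Ac a * Bc t - Bc a * Ac t) / δ with hrdef
    have h1 : Ac t = s * Ac a + r * Ac b := by
      rw [hsdef, hrdef]; field_simp; rw [hδdef]; ring
    have h2 : Bc t = s * Bc a + r * Bc b := by
      rw [hsdef, hrdef]; field_simp; rw [hδdef]; ring
    obtain ⟨v₁, hv₁⟩ := hφsurj x
    obtain ⟨v₂, hv₂⟩ := hφsurj y
    set c' : ℝ := Cc t - s * Cc a - r * Cc b with hc'def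
    have hφu : φ (of ℝ t - s • of ℝ a - r • of ℝ b - c' • ⁅v₁, v₂⁆) = 0 := by
      rw [map_sub φ, map_sub φ, map_sub φ, map_smul φ, map_smul φ, map_smul φ, φ.map_lie,
        hv₁, hv₂, hxy, hofco t, hofco a, hofco b, hc'def, h1, h2]
      module
    have hmem : of ℝ t - s • of ℝ a - r • of ℝ b - c' • ⁅v₁, v₂⁆ ∈ Γn 1 :=
      hIΓ1 ((hker _).mp hφu)
    apply Submodule.mem_sup.mpr
    refine ⟨s • of ℝ a + r • of ℝ b, ?_,
      (of ℝ t - s • of ℝ a - r • of ℝ b - c' • ⁅v₁, v₂⁆) + c' • ⁅v₁, v₂⁆, ?_, by abel⟩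
    · exact Submodule.add_mem _ (Submodule.smul_mem _ _ (Submodule.subset_span (by simp)))
        (Submodule.smul_mem _ _ (Submodule.subset_span (by simp)))
    · exact Submodule.add_mem _ hmem
        (Submodule.smul_mem _ _ (bracket_mem_gamma_one X v₁ v₂))
  -- brackets with `Γ¹` land in `Γ²`
  have hbrm : ∀ (m g : L), g ∈ Γn 1 → ⁅m, g⁆ ∈ Γn 2 := by
    intro m g hg
    show ⁅m, g⁆ ∈ LieModule.lowerCentralSeries ℝ L L 2
    rw [show (2 : ℕ) = 1 + 1 from rfl, LieModule.lowerCentralSeries_succ]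
    exact LieSubmodule.lie_mem_lie (LieSubmodule.mem_top m) hg
  have hbrm' : ∀ (m g : L), g ∈ Γn 1 → ⁅g, m⁆ ∈ Γn 2 := by
    intro m g hg
    rw [← lie_skew]
    exact neg_mem (hbrm m g hg)
  -- the quadratic part is contained in `ℝ∙p + Γ²`
  have hba' : ⁅of ℝ b, of ℝ a⁆ = -⁅of ℝ a, of ℝ b⁆ := by rw [← lie_skew]
  have hquadle : quadraticPart ℝ X ≤
      Submodule.span ℝ ({p} : Set L) ⊔ LieSubmodule.toSubmodule (Γn 2) := by
    rw [quadraticPart]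
    apply Submodule.span_le.mpr
    rintro _ ⟨u, hu, v, hv, rfl⟩
    have hd1 : degreeOnePart ℝ X ≤
        Submodule.span ℝ ({of ℝ a, of ℝ b} : Set L) ⊔ LieSubmodule.toSubmodule (Γn 1) := by
      rw [degreeOnePart]
      apply Submodule.span_le.mpr
      rintro _ ⟨t, rfl⟩
      exact hgen2 t
    obtain ⟨u₁, hu₁, g₁, hg₁, rfl⟩ := Submodule.mem_sup.mp (hd1 hu)
    obtain ⟨v₁, hv₁, g₂, hg₂, rfl⟩ := Submodule.mem_sup.mp (hd1 hv)
    obtain ⟨s₁, t₁, hu₁'⟩ := Submodule.mem_span_pair.mp hu₁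
    obtain ⟨s₂, t₂, hv₁'⟩ := Submodule.mem_span_pair.mp hv₁
    have hexp : ⁅u₁ + g₁, v₁ + g₂⁆ = ⁅u₁, v₁⁆ + (⁅u₁, g₂⁆ + ⁅g₁, v₁ + g₂⁆) := by
      rw [add_lie, lie_add]; abel
    rw [SetLike.mem_coe, hexp]
    apply Submodule.add_mem
    · apply Submodule.mem_sup_left
      have hcalc : ⁅s₁ • of ℝ a + t₁ • of ℝ b, s₂ • of ℝ a + t₂ • of ℝ b⁆
          = (s₁ * t₂ - t₁ * s₂) • ⁅of ℝ a, of ℝ b⁆ := by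
        simp only [add_lie, lie_add, smul_lie, lie_smul, lie_self, smul_zero, zero_add,
          add_zero, hba', smul_neg, smul_smul]
        module
      rw [← hu₁', ← hv₁', hcalc, ← hpdef]
      exact Submodule.smul_mem _ _ (Submodule.subset_span rfl)
    · apply Submodule.mem_sup_right
      exact Submodule.add_mem _ (hbrm _ _ hg₂) (hbrm' _ _ hg₁)
  -- elements of `W` lie in `Γ²`
  have hWΓ2 : ∀ w ∈ W, w ∈ Γn 2 := by
    intro w hw
    obtain ⟨cp, hcp, g, hg, hsum⟩ := Submodule.mem_sup.mp (hquadle (hW hw))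
    obtain ⟨c, hc⟩ := Submodule.mem_span_singleton.mp hcp
    have hφw : φ w = 0 := (hker w).mpr (hWI w hw)
    have hφg : φ g = 0 := hφΓ2 g hg
    have hcz : c • φ p = 0 := by
      have hφs := congrArg φ hsum
      rw [map_add φ, hφg, add_zero, hφw, ← hc, map_smul φ] at hφs
      exact hφs
    have hc0 : c = 0 := by
      rcases smul_eq_zero.mp hcz with h | h
      · exact h
      · exact absurd h hφpne
    have hwg : w = g := by rw [← hsum, ← hc, hc0, zero_smul, zero_add]
    rw [hwg]; exact hg
  -- the Lie algebra map to strictly upper triangular matrices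
  set f : L →ₗ⁅ℝ⁆ sut :=
    FreeLieAlgebra.lift ℝ (fun t : X => if t = a then nA else if t = b then nB else 0) with hfdef
  set F : L →ₗ⁅ℝ⁆ Stmt8Mat4 := sut.incl.comp f with hFdef
  have hFval : ∀ u : L, F u = ((f u : sut) : Stmt8Mat4) := fun u => rfl
  have hF1 : ∀ u : L, F u ∈ Pm 1 := fun u => (f u).2
  have hFof : ∀ t : X, F (of ℝ t) ∈ Dm 1 := by
    intro t
    rw [hFval, hfdef, lift_of_apply]
    split_ifs
    · exact Amat_mem
    · exact Bmat_mem
    · simp only [ZeroMemClass.coe_zero]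
      exact (Dm 1).zero_mem
  have hFd1 : ∀ u ∈ degreeOnePart ℝ X, F u ∈ Dm 1 := by
    have hle : degreeOnePart ℝ X ≤ (Dm 1).comap F.toLinearMap := by
      rw [degreeOnePart]
      apply Submodule.span_le.mpr
      rintro _ ⟨t, rfl⟩
      exact hFof t
    exact fun u hu => hle hu
  have hFquad : ∀ w ∈ quadraticPart ℝ X, F w ∈ Dm 2 := by
    have hle : quadraticPart ℝ X ≤ (Dm 2).comap F.toLinearMap := by
      rw [quadraticPart]
      apply Submodule.span_le.mpr
      rintro _ ⟨u, hu, v, hv, rfl⟩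
      simp only [SetLike.mem_coe, Submodule.mem_comap, LieHom.coe_toLinearMap]
      rw [F.map_lie, Ring.lie_def]
      exact sub_mem (mul_mem_Dm (hFd1 u hu) (hFd1 v hv)) (mul_mem_Dm (hFd1 v hv) (hFd1 u hu))
    exact fun w hw => hle hw
  have hFΓ : ∀ k : ℕ, ∀ u ∈ Γn k, F u ∈ Pm (k + 1) := by
    intro k
    induction k with
    | zero => exact fun u _ => hF1 u
    | succ k ih =>
      have hsp : LieSubmodule.toSubmodule (Γn (k + 1)) =
          Submodule.span ℝ {m : L | ∃ u ∈ (⊤ : LieIdeal ℝ L), ∃ v ∈ Γn k, ⁅u, v⁆ = m} := by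
        show LieSubmodule.toSubmodule (LieModule.lowerCentralSeries ℝ L L (k + 1)) = _
        rw [LieModule.lowerCentralSeries_succ]
        exact LieSubmodule.lieIdeal_oper_eq_linear_span' ..
      have hle : LieSubmodule.toSubmodule (Γn (k + 1)) ≤ (Pm (k + 1 + 1)).comap F.toLinearMap := by
        rw [hsp]
        apply Submodule.span_le.mpr
        rintro _ ⟨u, -, v, hv, rfl⟩
        simp only [SetLike.mem_coe, Submodule.mem_comap, LieHom.coe_toLinearMap]
        rw [F.map_lie, Ring.lie_def]
        refine sub_mem ?_ (mul_mem_Pm (ih v hv) (hF1 u))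
        have hmm := mul_mem_Pm (hF1 u) (ih v hv)
        rwa [Nat.add_comm 1 (k + 1)] at hmm
      exact fun u hu => hle hu
  have hfW : ∀ w ∈ W, f w = 0 := by
    intro w hw
    have h2 : F w ∈ Dm 2 := hFquad w (hW hw)
    have h3 : F w ∈ Pm 3 := hFΓ 2 w (hWΓ2 w hw)
    have h0 : F w = 0 := Dm2_Pm3 h2 h3
    exact Subtype.ext (by rw [← hFval w, h0]; rfl)
  have hker_f : LieSubmodule.lieSpan ℝ L (W : Set L) ≤ f.ker :=
    LieSubmodule.lieSpan_le.mpr fun w hw => LieHom.mem_ker.mpr (hfW w hw)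
  -- the element `q = [a,[a,b]]`
  set q : L := ⁅of ℝ a, p⁆ with hqdef
  have hpΓ1 : p ∈ Γn 1 := by rw [hpdef]; exact bracket_mem_gamma_one X _ _
  have hqΓ2 : q ∈ Γn 2 := hbrm _ _ hpΓ1
  have hqsup : q ∈ LieSubmodule.lieSpan ℝ L (W : Set L) ⊔ Γn 3 := hIle 3 (hΓ2I q hqΓ2)
  obtain ⟨w', hw', g', hg', hqsum⟩ := (LieSubmodule.mem_sup (N := LieSubmodule.lieSpan ℝ L (W : Set L)) (N' := Γn 3) q).mp hqsup
  have hfq0 : f q = 0 := by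
    rw [← hqsum, map_add f]
    have h1 : f w' = 0 := LieHom.mem_ker.mp (hker_f hw')
    have h2 : f g' = 0 := by
      have h0 : F g' = 0 := Pm_four (hFΓ 3 g' hg')
      exact Subtype.ext (by rw [← hFval g', h0]; rfl)
    rw [h1, h2, add_zero]
  have hfoa : f (of ℝ a) = nA := by rw [hfdef, lift_of_apply]; simp
  have hfob : f (of ℝ b) = nB := by
    rw [hfdef, lift_of_apply, if_neg fun h => hab h.symm, if_pos rfl]
  have hfq : f q = ⁅nA, ⁅nA, nB⁆⁆ := by
    rw [hqdef, hpdef, f.map_lie, f.map_lie, hfoa, hfob]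
  rw [hfq0] at hfq
  exact key_ne hfq.symm
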